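/- Let T and Δ be independent exponentially distributed random variables with rates λ_T > 0 and λ_Δ > 0, λ_Δ > λ_T, and let x > 0. Then the hit probability under delay exceeds or equals the zero-delay hit probability, i.e. P(Δ < x and x < Δ + T) ≥ P(x < T), if and only if λ_Δ·exp(−x·λ_Δ) ≤ λ_T·exp(−x·λ_T). In fact, P(Δ < x and x < Δ + T) − P(x < T) = (λ_T·exp(−x·λ_T) − λ_Δ·exp(−x·λ_Δ)) / (λ_Δ − λ_T). -/

import Mathlib

open MeasureTheory ProbabilityTheory Set Real


lemma expMeasure_Ioi {r : ℝ} (hr : 0 < r) {y : ℝ} (hy : 0 ≤ y) :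
    expMeasure r (Ioi y) = ENNReal.ofReal (Real.exp (-(r * y))) := by
  have h := isProbabilityMeasure_expMeasure hr
  have h1 : expMeasure r (Iic y) = ENNReal.ofReal (1 - Real.exp (-(r * y))) := by
    rw [expMeasure, gammaMeasure, withDensity_apply _ measurableSet_Iic]
    have := lintegral_exponentialPDF_eq_antiDeriv hr y
    rw [show (gammaPDF 1 r) = exponentialPDF r from rfl]
    rw [this, if_pos hy]
  have hcompl : Ioi y = (Iic y)ᶜ := by simp
  rw [hcompl, measure_compl measurableSet_Iic (measure_ne_top _ _), h1, measure_univ]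
  rw [← ENNReal.ofReal_one, ← ENNReal.ofReal_sub _ (sub_nonneg.2 (Real.exp_le_one_iff.2 (by nlinarith)))]
  norm_num

lemma exp_prod_hit {lamT lamD : ℝ} (hlamT : 0 < lamT) (hlt : lamT < lamD) {x : ℝ} (hx : 0 < x) :
    ((expMeasure lamD).prod (expMeasure lamT)) {p : ℝ × ℝ | p.1 < x ∧ x < p.1 + p.2}
      = ENNReal.ofReal (lamD * (Real.exp (-(lamT * x)) - Real.exp (-(lamD * x))) / (lamD - lamT)) := by
  have hlamD : 0 < lamD := hlamT.trans hlt
  haveI := isProbabilityMeasure_expMeasure hlamT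
  haveI := isProbabilityMeasure_expMeasure hlamD
  have hS : MeasurableSet {p : ℝ × ℝ | p.1 < x ∧ x < p.1 + p.2} :=
    (measurableSet_lt measurable_fst measurable_const).inter
      (measurableSet_lt measurable_const (measurable_fst.add measurable_snd))
  rw [Measure.prod_apply hS]
  have hinner : ∀ δ : ℝ,
      expMeasure lamT (Prod.mk δ ⁻¹' {p : ℝ × ℝ | p.1 < x ∧ x < p.1 + p.2})
        = (Iio x).indicator (fun δ => ENNReal.ofReal (Real.exp (-(lamT * (x - δ))))) δ := by
    intro δ
    by_cases hδ : δ < x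
    · have hpre : Prod.mk δ ⁻¹' {p : ℝ × ℝ | p.1 < x ∧ x < p.1 + p.2} = Ioi (x - δ) := by
        ext t
        simp only [mem_preimage, mem_setOf_eq, mem_Ioi]
        constructor
        · rintro ⟨-, h2⟩; linarith
        · intro h; exact ⟨hδ, by linarith⟩
      rw [hpre, expMeasure_Ioi hlamT (by linarith), Set.indicator_of_mem (mem_Iio.2 hδ)]
    · have hpre : Prod.mk δ ⁻¹' {p : ℝ × ℝ | p.1 < x ∧ x < p.1 + p.2} = ∅ := by
        ext t
        simp only [mem_preimage, mem_setOf_eq, mem_empty_iff_false, iff_false]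
        rintro ⟨h1, -⟩; exact hδ h1
      rw [hpre, measure_empty, Set.indicator_of_notMem (by simpa using hδ)]
  simp only [hinner]
  have hg : Measurable ((Iio x).indicator
      (fun δ => ENNReal.ofReal (Real.exp (-(lamT * (x - δ)))))) :=
    Measurable.indicator (by fun_prop) measurableSet_Iio
  have hpdf : Measurable (gammaPDF 1 lamD) := (measurable_gammaPDFReal 1 lamD).ennreal_ofReal
  rw [expMeasure, gammaMeasure, lintegral_withDensity_eq_lintegral_mul _ hpdf hg]
  have hcong : (fun δ => (gammaPDF 1 lamD * fun δ =>
        (Iio x).indicator (fun δ => ENNReal.ofReal (Real.exp (-(lamT * (x - δ))))) δ) δ)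
      =ᵐ[volume] (Ioo 0 x).indicator
        (fun δ => ENNReal.ofReal (lamD * Real.exp (-(lamD * δ)) * Real.exp (-(lamT * (x - δ))))) := by
    have h0 : (volume : Measure ℝ) {(0 : ℝ)} = 0 := measure_singleton 0
    filter_upwards [compl_mem_ae_iff.2 h0] with δ hδ0
    simp only [mem_compl_iff, mem_singleton_iff] at hδ0
    show gammaPDF 1 lamD δ * _ = _
    beta_reduce
    rw [show gammaPDF 1 lamD δ = exponentialPDF lamD δ from rfl]
    rcases lt_trichotomy δ 0 with h | h | h
    · rw [exponentialPDF_of_neg h, zero_mul,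
        indicator_of_notMem (by simp [mem_Ioo]; intro h'; linarith)]
    · exact absurd h hδ0
    · rw [exponentialPDF_of_nonneg h.le]
      by_cases hδx : δ < x
      · rw [Set.indicator_of_mem (show δ ∈ Iio x from hδx), Set.indicator_of_mem (mem_Ioo.2 ⟨h, hδx⟩),
          ← ENNReal.ofReal_mul (by positivity)]
      · rw [Set.indicator_of_notMem (show δ ∉ Iio x from hδx), indicator_of_notMem (by simp [mem_Ioo]; intro h'; linarith),
          mul_zero]
  rw [lintegral_congr_ae hcong, lintegral_indicator measurableSet_Ioo _]
  have hfcont : Continuous fun δ : ℝ => lamD * Real.exp (-(lamD * δ)) * Real.exp (-(lamT * (x - δ))) := by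
    fun_prop
  rw [← ofReal_integral_eq_lintegral_ofReal
    ((hfcont.integrableOn_Icc (a := 0) (b := x)).mono_set Ioo_subset_Icc_self)
    (Filter.Eventually.of_forall fun δ => by positivity)]
  congr 1
  rw [← integral_Ioc_eq_integral_Ioo, ← intervalIntegral.integral_of_le hx.le]
  have hk : lamT - lamD ≠ 0 := by linarith
  have hderiv : ∀ δ ∈ Set.uIcc 0 x, HasDerivAt
      (fun δ => lamD * Real.exp (-(lamT * x)) * Real.exp ((lamT - lamD) * δ) / (lamT - lamD))
      (lamD * Real.exp (-(lamD * δ)) * Real.exp (-(lamT * (x - δ)))) δ := by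
    intro δ _
    have h1 : HasDerivAt (fun δ : ℝ => Real.exp ((lamT - lamD) * δ))
        ((lamT - lamD) * Real.exp ((lamT - lamD) * δ)) δ := by
      simpa [mul_comm] using ((hasDerivAt_id δ).const_mul (lamT - lamD)).exp
    have h2 := (h1.const_mul (lamD * Real.exp (-(lamT * x)))).div_const (lamT - lamD)
    convert h2 using 1
    case e'_4 => rfl
    case e'_5 => rfl
    have hc : (lamT - lamD) * Real.exp ((lamT - lamD) * δ) / (lamT - lamD)
        = Real.exp ((lamT - lamD) * δ) := by field_simp
    rw [mul_div_assoc, hc, mul_assoc, mul_assoc, ← Real.exp_add, ← Real.exp_add]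
    congr 1
    ring
  rw [intervalIntegral.integral_eq_sub_of_hasDerivAt hderiv
    (hfcont.intervalIntegrable 0 x)]
  simp only [mul_zero, Real.exp_zero, mul_one]
  have he : Real.exp (-(lamT * x)) * Real.exp ((lamT - lamD) * x) = Real.exp (-(lamD * x)) := by
    rw [← Real.exp_add]; congr 1; ring
  rw [mul_assoc, he, div_sub_div_same, div_eq_div_iff hk (by linarith : lamD - lamT ≠ 0)]
  ring

/-- Let `T` and `Δ` be independent exponentials with rates `0 < lamT < lamD` and let
`x > 0` be the deterministic inter-request time of a periodic request stream. Then the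
hit probability under delay exceeds or equals the zero-delay hit probability, i.e.
`P(Δ < x < Δ + T) ≥ P(x < T)`, if and only if
`lamD·exp(-x·lamD) ≤ lamT·exp(-x·lamT)`; in fact
`P(Δ < x < Δ + T) - P(x < T) = (lamT·exp(-x·lamT) - lamD·exp(-x·lamD))/(lamD - lamT)`. -/
theorem delay_improves_hit_probability_iff
    {Ω : Type*} [MeasurableSpace Ω] (μ : Measure Ω) [IsProbabilityMeasure μ]
    (T Δ : Ω → ℝ) (lamT lamD : ℝ) (hlamT : 0 < lamT) (hlt : lamT < lamD)
    (hmT : Measurable T) (hmΔ : Measurable Δ)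
    (hT : μ.map T = expMeasure lamT) (hΔ : μ.map Δ = expMeasure lamD)
    (hindep : IndepFun T Δ μ) (x : ℝ) (hx : 0 < x) :
    ((μ {ω | Δ ω < x ∧ x < Δ ω + T ω}).toReal ≥ (μ {ω | x < T ω}).toReal ↔
        lamD * Real.exp (-x * lamD) ≤ lamT * Real.exp (-x * lamT)) ∧
      (μ {ω | Δ ω < x ∧ x < Δ ω + T ω}).toReal - (μ {ω | x < T ω}).toReal =
        (lamT * Real.exp (-x * lamT) - lamD * Real.exp (-x * lamD)) / (lamD - lamT) := by
  have hlamD : 0 < lamD := hlamT.trans hlt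
  have hq : μ {ω | x < T ω} = ENNReal.ofReal (Real.exp (-(lamT * x))) := by
    have h1 : {ω | x < T ω} = T ⁻¹' (Set.Ioi x) := rfl
    rw [h1, ← Measure.map_apply hmT measurableSet_Ioi, hT, expMeasure_Ioi hlamT hx.le]
  have hS : MeasurableSet {p : ℝ × ℝ | p.1 < x ∧ x < p.1 + p.2} :=
    (measurableSet_lt measurable_fst measurable_const).inter
      (measurableSet_lt measurable_const (measurable_fst.add measurable_snd))
  have hmapped : μ.map (fun ω => (Δ ω, T ω)) = (expMeasure lamD).prod (expMeasure lamT) := by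
    rw [← hΔ, ← hT]
    exact (indepFun_iff_map_prod_eq_prod_map_map hmΔ.aemeasurable hmT.aemeasurable).1 hindep.symm
  have hp : μ {ω | Δ ω < x ∧ x < Δ ω + T ω}
      = ENNReal.ofReal (lamD * (Real.exp (-(lamT * x)) - Real.exp (-(lamD * x))) / (lamD - lamT)) := by
    have hpre : {ω | Δ ω < x ∧ x < Δ ω + T ω}
        = (fun ω => (Δ ω, T ω)) ⁻¹' {p : ℝ × ℝ | p.1 < x ∧ x < p.1 + p.2} := rfl
    rw [hpre, ← Measure.map_apply (hmΔ.prodMk hmT) hS, hmapped, exp_prod_hit hlamT hlt hx]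
  have hba : Real.exp (-(lamD * x)) ≤ Real.exp (-(lamT * x)) :=
    Real.exp_le_exp.2 (by nlinarith)
  have hD : (0:ℝ) < lamD - lamT := by linarith
  rw [hq, hp, ENNReal.toReal_ofReal (div_nonneg (mul_nonneg hlamD.le (sub_nonneg.2 hba)) hD.le),
    ENNReal.toReal_ofReal (by positivity),
    show -x * lamD = -(lamD * x) by ring, show -x * lamT = -(lamT * x) by ring]
  constructor
  · rw [ge_iff_le, le_div_iff₀ hD]
    constructor <;> intro h <;> nlinarith
  · rw [div_sub' hD.ne', div_eq_div_iff hD.ne' hD.ne']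
    ring
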